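/- arXiv:2012.14296 — 3 statements merged into one kernel-verified Lean document; each statement's English description precedes it below -/
import Mathlib

section
/- Let G be a symmetric 3×3 real matrix with zero diagonal, G = [[0,ga,gb],[ga,0,gc],[gb,gc,0]]. If there exists a vector x* with all entries strictly positive such that Gx* = 0, then ga = 0 or gb = 0 or gc = 0. -/
theorem three_player_symm_edge_zero (ga gb gc : ℝ) (x : Fin 3 → ℝ)
    (hx : ∀ i, 0 < x i)
    (h : (!![0, ga, gb; ga, 0, gc; gb, gc, 0]).mulVec x = 0) :
    ga = 0 ∨ gb = 0 ∨ gc = 0 := by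
  have h0 := congrFun h 0
  have h1 := congrFun h 1
  have h2 := congrFun h 2
  simp [Matrix.mulVec, dotProduct, Fin.sum_univ_three] at h0 h1 h2
  have p0 := hx 0
  have p1 := hx 1
  have p2 := hx 2
  left
  have key : ga * (2 * x 0 * x 1) = 0 := by nlinarith [h0, h1, h2]
  have := mul_ne_zero (mul_ne_zero (by norm_num : (2:ℝ) ≠ 0) p0.ne') p1.ne'
  rcases mul_eq_zero.mp key with h | h
  · exact h
  · exact absurd h (by rw [mul_assoc] at this ⊢; exact this)
end

section
/- There exists a symmetric 4×4 real matrix G with zero diagonal and all off-diagonal entries nonzero, and a vector x* with strictly positive entries, such that Gx* = 0. -/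
theorem four_player_exists :
    ∃ (G : Matrix (Fin 4) (Fin 4) ℝ) (x : Fin 4 → ℝ),
      G.IsSymm ∧ (∀ i, G i i = 0) ∧ (∀ i j, i ≠ j → G i j ≠ 0) ∧
      (∀ i, 0 < x i) ∧ G.mulVec x = 0 := by
  refine ⟨!![0,1,1,-2; 1,0,-2,1; 1,-2,0,1; -2,1,1,0], fun _ => 1, ?_, ?_, ?_, ?_, ?_⟩
  · ext i j
    fin_cases i <;> fin_cases j <;> simp [Matrix.transpose]
  · intro i; fin_cases i <;> norm_num
  · intro i j h; fin_cases i <;> fin_cases j <;> simp_all <;> norm_num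
  · intro i; exact one_pos
  · ext i
    fin_cases i <;> simp [Matrix.mulVec, dotProduct, Fin.sum_univ_four] <;> norm_num
end

section
/- Let M and Γ be real N×N Z-matrices (all off-diagonal entries nonpositive) with equal diagonals, such that Γ_ij ≥ M_ij entrywise. If M is a P-matrix, then Γ is a P-matrix. -/
open Matrix

noncomputable def schurLast {N : ℕ} (B : Matrix (Fin (N+1)) (Fin (N+1)) ℝ) :
    Matrix (Fin N) (Fin N) ℝ :=
  fun i j => B i.castSucc j.castSucc -
    B i.castSucc (Fin.last N) * B (Fin.last N) j.castSucc / B (Fin.last N) (Fin.last N)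

theorem det_eq_schurLast {N : ℕ} (B : Matrix (Fin (N+1)) (Fin (N+1)) ℝ)
    (h : B (Fin.last N) (Fin.last N) ≠ 0) :
    B.det = B (Fin.last N) (Fin.last N) * (schurLast B).det := by
  set l := Fin.last N with hl
  set A : Matrix (Fin N) (Fin N) ℝ := fun i j => B i.castSucc j.castSucc with hA
  set b : Matrix (Fin N) (Fin 1) ℝ := fun i _ => B i.castSucc l with hb
  set c : Matrix (Fin 1) (Fin N) ℝ := fun _ j => B l j.castSucc with hc
  set d : Matrix (Fin 1) (Fin 1) ℝ := fun _ _ => B l l with hd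
  letI : Invertible d := ⟨fun _ _ => (B l l)⁻¹,
    by ext i j; fin_cases i; fin_cases j;
       erw [Matrix.mul_apply]; simp [Matrix.mul_apply, hd, inv_mul_cancel₀ h, Matrix.one_apply],
    by ext i j; fin_cases i; fin_cases j;
       erw [Matrix.mul_apply]; simp [Matrix.mul_apply, hd, mul_inv_cancel₀ h, Matrix.one_apply]⟩
  have hsub : B.submatrix (finSumFinEquiv (m := N) (n := 1))
      (finSumFinEquiv (m := N) (n := 1)) = fromBlocks A b c d := by
    ext i j
    have hr : ∀ x : Fin 1, (finSumFinEquiv (m := N) (n := 1)) (Sum.inr x) = l := by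
      intro x
      fin_cases x
      ext
      simp [hl]
    cases i <;> cases j <;>
      simp_all [fromBlocks, Fin.castSucc, Fin.castAdd, hA, hb, hc, hd, Fin.fin_one_eq_zero]
  have hdet : B.det = (fromBlocks A b c d).det := by
    rw [← hsub, Matrix.det_submatrix_equiv_self]
  rw [hdet, Matrix.det_fromBlocks₂₂]
  have hdd : d.det = B l l := by rw [Matrix.det_fin_one]
  have hschur : A - b * ⅟d * c = schurLast B := by
    ext i j
    have hinv : (⅟d : Matrix (Fin 1) (Fin 1) ℝ) 0 0 = (B l l)⁻¹ := rfl
    have hm : (b * ⅟d * c) i j = B i.castSucc l * (B l l)⁻¹ * B l j.castSucc := by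
      rw [Matrix.mul_apply, Fin.sum_univ_one, Matrix.mul_apply, Fin.sum_univ_one, hinv]
    rw [Matrix.sub_apply, hm]
    simp only [schurLast, Matrix.sub_apply, hm, hA, div_eq_mul_inv, ← hl]
    ring
  rw [hdd, hschur]

theorem key_comparison : ∀ (N : ℕ) (M Γ : Matrix (Fin N) (Fin N) ℝ),
    (∀ i j, i ≠ j → M i j ≤ 0) → (∀ i j, i ≠ j → Γ i j ≤ 0) →
    (∀ i j, M i j ≤ Γ i j) →
    (∀ (k : ℕ) (f : Fin k → Fin N), Function.Injective f → 0 < (M.submatrix f f).det) →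
    0 < Γ.det := by
  intro N
  induction N with
  | zero =>
    intro M Γ _ _ _ _
    simp [Matrix.det_isEmpty]
  | succ N ih =>
    intro M Γ hMZ hΓZ hle hM
    set l := Fin.last N with hl
    -- diagonal entries positive
    have hdM : 0 < M l l := by
      have := hM 1 (fun _ => l) (Function.injective_of_subsingleton _)
      simpa [Matrix.det_fin_one] using this
    have hdΓ : 0 < Γ l l := lt_of_lt_of_le hdM (hle l l)
    -- all entries B i l, B l j (i,j < N) are nonpositive, and products compare
    have castne : ∀ i : Fin N, i.castSucc ≠ l := fun i => (Fin.castSucc_lt_last i).ne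
    have prodcmp : ∀ i j : Fin N,
        Γ i.castSucc l * Γ l j.castSucc / Γ l l ≤ M i.castSucc l * M l j.castSucc / M l l := by
      intro i j
      have h1 : M i.castSucc l ≤ Γ i.castSucc l := hle _ _
      have h2 : M l j.castSucc ≤ Γ l j.castSucc := hle _ _
      have h3 : Γ i.castSucc l ≤ 0 := hΓZ _ _ (castne i)
      have h4 : Γ l j.castSucc ≤ 0 := hΓZ _ _ fun e => (castne j) e.symm
      have hp1 : 0 ≤ Γ i.castSucc l * Γ l j.castSucc := mul_nonneg_of_nonpos_of_nonpos h3 h4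
      have hp2 : Γ i.castSucc l * Γ l j.castSucc ≤ M i.castSucc l * M l j.castSucc := by
        nlinarith
      exact div_le_div₀ (le_trans hp1 hp2) hp2 hdM (hle l l)
    -- Schur complements
    have hMZ' : ∀ i j : Fin N, i ≠ j → schurLast M i j ≤ 0 := by
      intro i j hij
      have h1 : M i.castSucc j.castSucc ≤ 0 :=
        hMZ _ _ (fun e => hij (Fin.castSucc_injective _ e))
      have h3 : M i.castSucc l ≤ 0 := hMZ _ _ (castne i)
      have h4 : M l j.castSucc ≤ 0 := hMZ _ _ fun e => (castne j) e.symm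
      have : 0 ≤ M i.castSucc l * M l j.castSucc / M l l :=
        div_nonneg (mul_nonneg_of_nonpos_of_nonpos h3 h4) hdM.le
      simp only [schurLast]
      linarith
    have hΓZ' : ∀ i j : Fin N, i ≠ j → schurLast Γ i j ≤ 0 := by
      intro i j hij
      have h1 : Γ i.castSucc j.castSucc ≤ 0 :=
        hΓZ _ _ (fun e => hij (Fin.castSucc_injective _ e))
      have h3 : Γ i.castSucc l ≤ 0 := hΓZ _ _ (castne i)
      have h4 : Γ l j.castSucc ≤ 0 := hΓZ _ _ fun e => (castne j) e.symm
      have : 0 ≤ Γ i.castSucc l * Γ l j.castSucc / Γ l l :=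
        div_nonneg (mul_nonneg_of_nonpos_of_nonpos h3 h4) hdΓ.le
      simp only [schurLast]
      linarith
    have hle' : ∀ i j : Fin N, schurLast M i j ≤ schurLast Γ i j := by
      intro i j
      have := prodcmp i j
      have h1 : M i.castSucc j.castSucc ≤ Γ i.castSucc j.castSucc := hle _ _
      simp only [schurLast]
      linarith
    -- minors of schurLast M
    have hM' : ∀ (k : ℕ) (f : Fin k → Fin N), Function.Injective f →
        0 < ((schurLast M).submatrix f f).det := by
      intro k f hf
      set g : Fin (k+1) → Fin (N+1) := Fin.snoc (fun i => (f i).castSucc) l with hg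
      have hginj : Function.Injective g := by
        intro a b hab
        induction a using Fin.lastCases with
        | last =>
          induction b using Fin.lastCases with
          | last => rfl
          | cast b =>
            exfalso
            rw [hg] at hab
            simp only [Fin.snoc_last, Fin.snoc_castSucc] at hab
            exact (Fin.castSucc_lt_last (f b)).ne hab.symm
        | cast a =>
          induction b using Fin.lastCases with
          | last =>
            exfalso
            rw [hg] at hab
            simp only [Fin.snoc_last, Fin.snoc_castSucc] at hab
            exact (Fin.castSucc_lt_last (f a)).ne hab
          | cast b =>
            rw [hg] at hab
            simp only [Fin.snoc_castSucc] at hab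
            exact congrArg Fin.castSucc (hf (Fin.castSucc_injective _ hab))
      have hgl : g (Fin.last k) = l := by simp [hg]
      have hgc : ∀ i : Fin k, g i.castSucc = (f i).castSucc := by
        intro i; simp [hg]
      have hcomm : (schurLast M).submatrix f f = schurLast (M.submatrix g g) := by
        ext i j
        simp [schurLast, Matrix.submatrix_apply, hgl, hgc]
        rfl
      have hBll : (M.submatrix g g) (Fin.last k) (Fin.last k) = M l l := by
        simp [hgl]
      have hdetB : 0 < (M.submatrix g g).det := hM (k+1) g hginj
      have := det_eq_schurLast (M.submatrix g g) (by rw [hBll]; exact hdM.ne')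
      rw [this, hBll] at hdetB
      rw [hcomm]
      nlinarith
    have hschurΓ : 0 < (schurLast Γ).det := ih (schurLast M) (schurLast Γ) hMZ' hΓZ' hle' hM'
    rw [det_eq_schurLast Γ hdΓ.ne']
    exact mul_pos hdΓ hschurΓ

theorem P_matrix_of_Z_matrix_comparison {N : ℕ} (M Γ : Matrix (Fin N) (Fin N) ℝ)
    (hMZ : ∀ i j, i ≠ j → M i j ≤ 0) (hΓZ : ∀ i j, i ≠ j → Γ i j ≤ 0)
    (hdiag : ∀ i, Γ i i = M i i) (hle : ∀ i j, M i j ≤ Γ i j)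
    (hM : ∀ (k : ℕ) (f : Fin k → Fin N), Function.Injective f →
      0 < (M.submatrix f f).det) :
    ∀ (k : ℕ) (f : Fin k → Fin N), Function.Injective f →
      0 < (Γ.submatrix f f).det := by
  intro k f hf
  apply key_comparison k (M.submatrix f f) (Γ.submatrix f f)
  · intro i j hij
    exact hMZ _ _ (fun e => hij (hf e))
  · intro i j hij
    exact hΓZ _ _ (fun e => hij (hf e))
  · intro i j
    exact hle _ _
  · intro k' f' hf'
    rw [Matrix.submatrix_submatrix]
    exact hM k' (f ∘ f') (hf.comp hf')
end
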